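/- arXiv:2407.17411 — 2 statements merged into one kernel-verified Lean document; each statement's English description precedes it below -/
import Mathlib

section
/- Let p be a prime number, let n ≥ 1 and k ≥ 2 be integers, and let (x_m)_{m ≥ k−1} be a family of elements of ℚ_p such that for every integer m ≥ k−1 one has ‖x_m‖_p ≤ p^{⌊log m / log p⌋} · p^{−n(m − (k−2)/2)} (where ⌊log m / log p⌋ = Nat.log p m and the second exponent is a rational number, interpreted via real powers of p). Then the family (x_m)_{m ≥ k−1} is summable in ℚ_p and its sum S satisfies ‖S‖_p ≤ p^{−(nk/2 − ⌊log(k−1)/log p⌋)}. -/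
lemma log_le_log_add (p a b : ℕ) (hp : 1 < p) (ha : 1 ≤ a) (hab : a ≤ b) :
    Nat.log p b ≤ Nat.log p a + (b - a) := by
  have hd : b - a < 2 ^ (b - a) := Nat.lt_two_pow_self (n := b - a)
  have h2 : b ≤ a * 2 ^ (b - a) := by
    have : a + (b - a) ≤ a * (b - a + 1) := by nlinarith
    calc b = a + (b - a) := by omega
      _ ≤ a * (b - a + 1) := this
      _ ≤ a * 2 ^ (b - a) := Nat.mul_le_mul_left a (by omega)
  have h3 : b < p ^ (Nat.log p a + (b - a) + 1) := by
    calc b ≤ a * 2 ^ (b - a) := h2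
      _ ≤ a * p ^ (b - a) := Nat.mul_le_mul_left a (Nat.pow_le_pow_left hp _)
      _ < p ^ (Nat.log p a + 1) * p ^ (b - a) := by
          exact Nat.mul_lt_mul_of_lt_of_le (Nat.lt_pow_succ_log_self hp a) le_rfl
            (Nat.pow_pos (by omega))
      _ = p ^ (Nat.log p a + (b - a) + 1) := by rw [← pow_add]; ring_nf
  have hb0 : b ≠ 0 := by omega
  have := Nat.log_lt_of_lt_pow hb0 h3
  omega

/-- If `p` is prime, `n ≥ 1`, `k ≥ 2`, and `(x_m)_{m ≥ k−1}` is a family in `ℚ_p`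
with `‖x m‖ ≤ p^(Nat.log p m) · p^(−n(m − (k−2)/2))` for all `m ≥ k−1`, then the
family is summable and its sum has norm at most `p^(−(nk/2 − Nat.log p (k−1)))`. -/
theorem stmt1 (p : ℕ) [Fact p.Prime] (n k : ℕ) (hn : 1 ≤ n) (hk : 2 ≤ k)
    (x : ℕ → ℚ_[p])
    (hx : ∀ m : ℕ, k - 1 ≤ m →
      ‖x m‖ ≤ (p : ℝ) ^ (Nat.log p m : ℝ) *
        (p : ℝ) ^ (-((n : ℝ) * ((m : ℝ) - ((k : ℝ) - 2) / 2)))) :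
    Summable (fun m : {m : ℕ // k - 1 ≤ m} => x m) ∧
    ‖∑' m : {m : ℕ // k - 1 ≤ m}, x (m : ℕ)‖ ≤
      (p : ℝ) ^ (-((n : ℝ) * (k : ℝ) / 2 - (Nat.log p (k - 1) : ℝ))) := by
  have hpnat : 1 < p := (Fact.out : p.Prime).one_lt
  have hp1 : (1 : ℝ) < (p : ℝ) := by exact_mod_cast hpnat
  have hp0 : (0 : ℝ) < (p : ℝ) := by positivity
  -- the geometric ratio
  set r : ℝ := (p : ℝ) ^ (-(n : ℝ)) with hr
  have hr0 : 0 < r := Real.rpow_pos_of_pos hp0 _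
  have hr1 : r < 1 := Real.rpow_lt_one_of_one_lt_of_neg hp1 (by
    have : (1 : ℝ) ≤ (n : ℝ) := by exact_mod_cast hn
    linarith)
  set C : ℝ := (p : ℝ) ^ ((n : ℝ) * ((k : ℝ) - 2) / 2) with hC
  have hC0 : 0 < C := Real.rpow_pos_of_pos hp0 _
  -- pointwise bound for summability
  have hbound : ∀ m : ℕ, k - 1 ≤ m → ‖x m‖ ≤ C * ((m : ℝ) * r ^ m) := by
    intro m hm
    have hm0 : m ≠ 0 := by omega
    have h1 : (p : ℝ) ^ (Nat.log p m : ℝ) ≤ (m : ℝ) := by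
      rw [Real.rpow_natCast]
      exact_mod_cast Nat.pow_log_le_self p hm0
    have h2 : (p : ℝ) ^ (-((n : ℝ) * ((m : ℝ) - ((k : ℝ) - 2) / 2))) = C * r ^ m := by
      rw [hC, hr, ← Real.rpow_natCast ((p : ℝ) ^ (-(n : ℝ))) m,
        ← Real.rpow_mul hp0.le, ← Real.rpow_add hp0]
      ring_nf
    calc ‖x m‖ ≤ (p : ℝ) ^ (Nat.log p m : ℝ) *
        (p : ℝ) ^ (-((n : ℝ) * ((m : ℝ) - ((k : ℝ) - 2) / 2))) := hx m hm
      _ = (p : ℝ) ^ (Nat.log p m : ℝ) * (C * r ^ m) := by rw [h2]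
      _ ≤ (m : ℝ) * (C * r ^ m) := by
          apply mul_le_mul_of_nonneg_right h1
          positivity
      _ = C * ((m : ℝ) * r ^ m) := by ring
  have hgsum : Summable (fun m : ℕ => C * ((m : ℝ) * r ^ m)) := by
    have := summable_pow_mul_geometric_of_norm_lt_one (R := ℝ) 1
      (r := r) (by rw [Real.norm_of_nonneg hr0.le]; exact hr1)
    simpa [pow_one] using this.mul_left C
  have hsummable : Summable (fun m : {m : ℕ // k - 1 ≤ m} => x m) := by
    apply Summable.of_norm_bounded (hgsum.subtype _)
    exact fun m => hbound m m.2
  refine ⟨hsummable, ?_⟩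
  -- pointwise sup bound
  have hsup : ∀ m : ℕ, k - 1 ≤ m →
      ‖x m‖ ≤ (p : ℝ) ^ (-((n : ℝ) * (k : ℝ) / 2 - (Nat.log p (k - 1) : ℝ))) := by
    intro m hm
    refine (hx m hm).trans ?_
    rw [← Real.rpow_add hp0]
    apply Real.rpow_le_rpow_of_exponent_le hp1.le
    have hlognat : Nat.log p m ≤ Nat.log p (k - 1) + (m - (k - 1)) :=
      log_le_log_add p (k - 1) m hpnat (by omega) hm
    have hlog : (Nat.log p m : ℝ) ≤ (Nat.log p (k - 1) : ℝ) + ((m : ℝ) - ((k : ℝ) - 1)) := by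
      have h1 : ((Nat.log p (k - 1) + (m - (k - 1)) : ℕ) : ℝ)
          = (Nat.log p (k - 1) : ℝ) + ((m : ℝ) - ((k : ℝ) - 1)) := by
        push_cast [Nat.cast_sub hm, Nat.cast_sub (by omega : 1 ≤ k)]
        ring
      calc (Nat.log p m : ℝ) ≤ ((Nat.log p (k - 1) + (m - (k - 1)) : ℕ) : ℝ) := by
            exact_mod_cast hlognat
        _ = _ := h1
    have hn1 : (1 : ℝ) ≤ (n : ℝ) := by exact_mod_cast hn
    have hm1 : (k : ℝ) - 1 ≤ (m : ℝ) := by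
      have : ((k - 1 : ℕ) : ℝ) ≤ (m : ℝ) := by exact_mod_cast hm
      rwa [Nat.cast_sub (by omega : 1 ≤ k), Nat.cast_one] at this
    nlinarith [mul_le_mul_of_nonneg_right hn1 (by linarith : (0:ℝ) ≤ (m : ℝ) - ((k:ℝ) - 1))]
  exact IsUltrametricDist.norm_tsum_le_of_forall_le_of_nonneg
    (by positivity) (fun m => hsup m m.2)
end

section
/- Let p be a prime number, let a be a unit of the ring ℤ_p of p-adic integers, let c ∈ ℤ_p, and let n ≥ 0 be an integer. In the formal power series ring ℚ_p⟦T⟧, set F(T) = (T + a)^n · ( c + Σ_{j ≥ 1} ((−1)^{j−1} / j) · a^{−j} · T^j ). Then for every integer m ≥ 0, the m-th coefficient c_m of F satisfies ‖c_m‖_p ≤ p^{⌊log m / log p⌋}, equivalently v_p(c_m) ≥ −⌊log m / log p⌋ (with the convention ⌊log 0 / log p⌋ = 0, i.e. ⌊log m / log p⌋ = Nat.log p m). -/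
open PowerSeries in
/-- Coefficient bound for the power series
`F(T) = (T + a)^n · (c + Σ_{j ≥ 1} ((−1)^(j−1)/j) a^(−j) T^j)` over `ℚ_p`,
where `a ∈ ℤ_p` is a unit and `c ∈ ℤ_p`:  the `m`-th coefficient has norm at most
`p^(Nat.log p m)`. -/
theorem stmt2 (p : ℕ) [Fact p.Prime] (a : ℤ_[p]ˣ) (c : ℤ_[p]) (n : ℕ)
    (F : PowerSeries ℚ_[p])
    (hF : F = (PowerSeries.X + PowerSeries.C (((a : ℤ_[p]) : ℚ_[p]))) ^ n *
      PowerSeries.mk (fun j => if j = 0 then ((c : ℚ_[p]))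
        else ((-1 : ℚ_[p]) ^ (j - 1) / (j : ℚ_[p])) * ((((a : ℤ_[p]) : ℚ_[p]))⁻¹) ^ j)) :
    ∀ m : ℕ, ‖PowerSeries.coeff m F‖ ≤ (p : ℝ) ^ (Nat.log p m) := by
  intro m
  have hp1 : (1 : ℝ) ≤ (p : ℝ) := by
    exact_mod_cast (Fact.out : p.Prime).one_lt.le
  have hone : (1 : ℝ) ≤ (p : ℝ) ^ (Nat.log p m) := one_le_pow₀ hp1
  -- norm of coefficients of (X + C a)^n are ≤ 1
  have hfirst : ∀ i : ℕ,
      ‖(PowerSeries.coeff i) ((PowerSeries.X + PowerSeries.C (((a : ℤ_[p]) : ℚ_[p]))) ^ n)‖ ≤ 1 := by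
    intro i
    have hmap : ((PowerSeries.X + PowerSeries.C (((a : ℤ_[p]) : ℚ_[p]))) ^ n)
        = PowerSeries.map (PadicInt.Coe.ringHom) ((PowerSeries.X + PowerSeries.C (a : ℤ_[p])) ^ n) := by
      rw [map_pow, map_add, PowerSeries.map_X, PowerSeries.map_C]
      rfl
    rw [hmap, PowerSeries.coeff_map]
    have := PadicInt.padic_norm_e_of_padicInt
      ((PowerSeries.coeff i) ((PowerSeries.X + PowerSeries.C (a : ℤ_[p])) ^ n))
    rw [show (PadicInt.Coe.ringHom : ℤ_[p] →+* ℚ_[p])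
        ((PowerSeries.coeff i) ((PowerSeries.X + PowerSeries.C (a : ℤ_[p])) ^ n)) =
        ((((PowerSeries.coeff i) ((PowerSeries.X + PowerSeries.C (a : ℤ_[p])) ^ n) : ℤ_[p]) : ℚ_[p])) from rfl,
      this]
    exact PadicInt.norm_le_one _
  -- norm of second-factor coefficients
  have hsecond : ∀ j : ℕ, j ≤ m →
      ‖(if j = 0 then ((c : ℤ_[p]) : ℚ_[p])
        else ((-1 : ℚ_[p]) ^ (j - 1) / (j : ℚ_[p])) * ((((a : ℤ_[p]) : ℚ_[p]))⁻¹) ^ j)‖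
        ≤ (p : ℝ) ^ (Nat.log p m) := by
    intro j hj
    rcases Nat.eq_zero_or_pos j with hj0 | hj0
    · simp only [hj0, if_pos rfl]
      calc ‖((c : ℤ_[p]) : ℚ_[p])‖ ≤ 1 := by
            rw [PadicInt.padic_norm_e_of_padicInt]; exact PadicInt.norm_le_one _
        _ ≤ _ := hone
    · rw [if_neg hj0.ne']
      have hanorm : ‖(((a : ℤ_[p]) : ℚ_[p]))⁻¹‖ = 1 := by
        rw [norm_inv, PadicInt.padic_norm_e_of_padicInt, PadicInt.norm_units, inv_one]
      have hjnorm : ‖((j : ℚ_[p]))‖⁻¹ ≤ (p : ℝ) ^ (Nat.log p m) := by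
        have hjne : ((j : ℚ_[p])) ≠ 0 := Nat.cast_ne_zero.mpr hj0.ne'
        rw [Padic.norm_eq_zpow_neg_valuation hjne, Padic.valuation_natCast, ← zpow_neg, neg_neg,
          ← zpow_natCast]
        have h1 : padicValNat p j ≤ Nat.log p m :=
          (padicValNat_le_nat_log j).trans (Nat.log_mono_right hj)
        exact zpow_le_zpow_right₀ hp1 (by exact_mod_cast h1)
      calc ‖((-1 : ℚ_[p]) ^ (j - 1) / (j : ℚ_[p])) * ((((a : ℤ_[p]) : ℚ_[p]))⁻¹) ^ j‖
          = ‖(-1 : ℚ_[p]) ^ (j - 1)‖ * ‖((j : ℚ_[p]))‖⁻¹ * ‖(((a : ℤ_[p]) : ℚ_[p]))⁻¹‖ ^ j := by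
            rw [norm_mul, norm_div, norm_pow, div_eq_mul_inv, norm_pow]
        _ = ‖((j : ℚ_[p]))‖⁻¹ := by
            simp [hanorm]
        _ ≤ _ := hjnorm
  subst hF
  rw [PowerSeries.coeff_mul]
  refine IsUltrametricDist.norm_sum_le_of_forall_le_of_nonneg (by linarith) ?_
  rintro ⟨i, j⟩ hij
  rw [Finset.HasAntidiagonal.mem_antidiagonal] at hij
  have hjm : j ≤ m := hij ▸ Nat.le_add_left j i
  rw [PowerSeries.coeff_mk]
  calc ‖_ * _‖ = ‖_‖ * ‖_‖ := norm_mul _ _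
    _ ≤ 1 * ((p : ℝ) ^ (Nat.log p m)) :=
        mul_le_mul (hfirst i) (hsecond j hjm) (norm_nonneg _) zero_le_one
    _ = _ := one_mul _
end
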